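/- For every real D > 1, the function g(d) = (1 + D/(d(D-1) - 1))^{d+1}, defined for real d with d(D-1) > 1, is strictly decreasing in d, and its limit as d → ∞ is e^{D/(D-1)}. -/

import Mathlib

open Real Filter Set

theorem g_strict_anti_and_limit (D : ℝ) (hD : 1 < D) :
    StrictAntiOn (fun d : ℝ => (1 + D / (d * (D - 1) - 1)) ^ (d + 1))
      {d : ℝ | 1 < d * (D - 1)} ∧
    Filter.Tendsto (fun d : ℝ => (1 + D / (d * (D - 1) - 1)) ^ (d + 1))
      Filter.atTop (nhds (Real.exp (D / (D - 1)))) := by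
  have hb : (0:ℝ) < D - 1 := by linarith
  have hD0 : (0:ℝ) < D := by linarith
  set f : ℝ → ℝ := fun d => (d + 1) * Real.log (1 + D / (d * (D - 1) - 1)) with hf
  have hset : {d : ℝ | 1 < d * (D - 1)} = Ioi (1 / (D - 1)) := by
    ext d
    simp only [mem_setOf_eq, mem_Ioi, div_lt_iff₀ hb]
  -- derivative of f
  have key : ∀ d ∈ Ioi (1 / (D - 1)),
      HasDerivAt f (Real.log (1 + D / (d * (D - 1) - 1)) - D / (d * (D - 1) - 1)) d := by
    intro d hd
    rw [mem_Ioi, div_lt_iff₀ hb] at hd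
    have hx : 0 < d * (D - 1) - 1 := by linarith
    have hxne : d * (D - 1) - 1 ≠ 0 := ne_of_gt hx
    have hu : 0 < 1 + D / (d * (D - 1) - 1) := by positivity
    have h1 : HasDerivAt (fun d : ℝ => d * (D - 1) - 1) (D - 1) d := by
      simpa using ((hasDerivAt_id d).mul_const (D - 1)).sub_const 1
    have h2 : HasDerivAt (fun d : ℝ => D / (d * (D - 1) - 1))
        ((0 * (d * (D - 1) - 1) - D * (D - 1)) / (d * (D - 1) - 1) ^ 2) d :=
      (hasDerivAt_const d D).div h1 hxne
    have h3 : HasDerivAt (fun d : ℝ => 1 + D / (d * (D - 1) - 1))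
        ((0 * (d * (D - 1) - 1) - D * (D - 1)) / (d * (D - 1) - 1) ^ 2) d :=
      h2.const_add 1
    have h4 := h3.log (ne_of_gt hu)
    have h5 := ((hasDerivAt_id d).add_const 1).mul h4
    convert h5 using 1
    have huz : 1 + D / (d * (D - 1) - 1) ≠ 0 := ne_of_gt hu
    case e'_9 =>
      simp only [id]
      field_simp
      ring
    all_goals rfl
  have hanti_f : StrictAntiOn f (Ioi (1 / (D - 1))) := by
    apply strictAntiOn_of_deriv_neg (convex_Ioi _)
    · intro d hd
      exact (key d hd).continuousAt.continuousWithinAt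
    · rw [interior_Ioi]
      intro d hd
      rw [(key d hd).deriv]
      have hd' := hd
      rw [mem_Ioi, div_lt_iff₀ hb] at hd'
      have hx : 0 < d * (D - 1) - 1 := by linarith
      have ht : 0 < D / (d * (D - 1) - 1) := by positivity
      have := Real.log_lt_sub_one_of_pos (show (0:ℝ) < 1 + D / (d * (D - 1) - 1) by linarith)
        (by linarith)
      linarith
  have hpos : ∀ d ∈ Ioi (1 / (D - 1)), 0 < 1 + D / (d * (D - 1) - 1) := by
    intro d hd
    rw [mem_Ioi, div_lt_iff₀ hb] at hd
    have hx : 0 < d * (D - 1) - 1 := by linarith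
    positivity
  have hg : ∀ d ∈ Ioi (1 / (D - 1)),
      (1 + D / (d * (D - 1) - 1)) ^ (d + 1) = Real.exp (f d) := by
    intro d hd
    rw [Real.rpow_def_of_pos (hpos d hd), hf]
    ring_nf
  constructor
  · rw [hset]
    intro a ha c hc hac
    simp only
    rw [hg a ha, hg c hc]
    exact Real.exp_lt_exp.2 (hanti_f ha hc hac)
  · -- limit
    have hA : Tendsto (fun d : ℝ => d * (D - 1) - 1) atTop atTop := by
      apply tendsto_atTop_add_const_right
      exact Tendsto.atTop_mul_const hb tendsto_id
    have hB : Tendsto (fun d : ℝ => (d * (D - 1) - 1) * Real.log (1 + D / (d * (D - 1) - 1)))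
        atTop (nhds D) :=
      (Real.tendsto_mul_log_one_add_div_atTop D).comp hA
    have hC : Tendsto (fun d : ℝ => (d + 1) / (d * (D - 1) - 1)) atTop (nhds (1 / (D - 1))) := by
      have h1 : Tendsto (fun d : ℝ => (1 + d⁻¹) / ((D - 1) - d⁻¹)) atTop
          (nhds ((1 + 0) / ((D - 1) - 0))) := by
        apply Tendsto.div
        · exact tendsto_const_nhds.add tendsto_inv_atTop_zero
        · exact tendsto_const_nhds.sub tendsto_inv_atTop_zero
        · simpa using ne_of_gt hb
      simp only [add_zero, sub_zero] at h1
      apply h1.congr'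
      filter_upwards [eventually_gt_atTop (max 0 (1 / (D - 1)))] with d hd
      have hd0 : 0 < d := lt_of_le_of_lt (le_max_left _ _) hd
      have hd1 : 1 / (D - 1) < d := lt_of_le_of_lt (le_max_right _ _) hd
      rw [div_lt_iff₀ hb] at hd1
      have hx : 0 < d * (D - 1) - 1 := by linarith
      have hne1 : d * (D - 1) - 1 ≠ 0 := ne_of_gt hx
      have hne2 : d ≠ 0 := ne_of_gt hd0
      have hne3 : D - 1 - d⁻¹ ≠ 0 := by
        have : D - 1 - d⁻¹ = (d * (D - 1) - 1) / d := by field_simp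
        rw [this]
        positivity
      rw [div_eq_div_iff hne3 hne1]
      field_simp
    have hF : Tendsto f atTop (nhds (D / (D - 1))) := by
      have := hC.mul hB
      have heq : (1 / (D - 1)) * D = D / (D - 1) := by ring
      rw [heq] at this
      apply this.congr'
      filter_upwards [eventually_gt_atTop (max 0 (1 / (D - 1)))] with d hd
      have hd1 : 1 / (D - 1) < d := lt_of_le_of_lt (le_max_right _ _) hd
      rw [div_lt_iff₀ hb] at hd1
      have hx : 0 < d * (D - 1) - 1 := by linarith
      rw [hf]
      field_simp
    have := (Real.continuous_exp.tendsto _).comp hF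
    apply this.congr'
    filter_upwards [eventually_gt_atTop (1 / (D - 1))] with d hd
    exact (hg d hd).symm
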